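/- Let a ∈ (0,∞) and let φ : [0,a] → [0,∞) be a nondecreasing, concave function vanishing only at the origin (φ(t) = 0 if and only if t = 0). Assume that lim_{t→0+} t/φ(t) = 0 and lim_{t→0+} φ(t) = 0. Then there exists a nondecreasing, concave function ψ : [0,a] → [0,∞) such that ψ ≤ φ on [0,a], ψ vanishes only at the origin, liminf_{t→0+} ψ(t)/φ(t) = 0, and limsup_{t→0+} ψ(t)/φ(t) = 1. -/

import Mathlib

open Filter Set

noncomputable def slA (φ : ℝ → ℝ) (u : ℕ → ℝ) (n : ℕ) : ℝ :=
  (φ (u n) - φ (u (n + 1))) / (u n - u (n + 1))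

noncomputable def LA (φ : ℝ → ℝ) (u : ℕ → ℝ) (n : ℕ) (t : ℝ) : ℝ :=
  φ (u (n + 1)) + slA φ u n * (t - u (n + 1))

noncomputable def psiA (φ : ℝ → ℝ) (u : ℕ → ℝ) (t : ℝ) : ℝ := ⨅ n, LA φ u n t

theorem aux0 (a : ℝ) (ha : 0 < a) (φ : ℝ → ℝ)
    (hmono : MonotoneOn φ (Icc 0 a))
    (hconc : ConcaveOn ℝ (Icc 0 a) φ)
    (hnonneg : ∀ t ∈ Icc 0 a, 0 ≤ φ t)
    (hvanish : ∀ t ∈ Icc 0 a, φ t = 0 ↔ t = 0)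
    (hlim2 : Tendsto φ (nhdsWithin 0 (Ioc 0 a)) (nhds 0))
    (u s : ℕ → ℝ) (hu0 : u 0 = a) (hupos : ∀ n, 0 < u n) (hua : ∀ n, u n ≤ a)
    (hs1 : ∀ n, u (n + 1) < s n) (hs2 : ∀ n, s n ≤ u n / 2)
    (hs3 : ∀ n, s n * (2 * (n + 1) * φ (u n)) ≤ φ (s n) * u n)
    (hs4 : ∀ n : ℕ, ((n : ℝ) + 1) * φ (u (n + 1)) ≤ φ (s n)) :
    ∃ ψ : ℝ → ℝ,
      MonotoneOn ψ (Icc 0 a) ∧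
      ConcaveOn ℝ (Icc 0 a) ψ ∧
      (∀ t ∈ Icc 0 a, 0 ≤ ψ t ∧ ψ t ≤ φ t) ∧
      (∀ t ∈ Icc 0 a, ψ t = 0 ↔ t = 0) ∧
      liminf (fun t => ψ t / φ t) (nhdsWithin 0 (Ioc 0 a)) = 0 ∧
      limsup (fun t => ψ t / φ t) (nhdsWithin 0 (Ioc 0 a)) = 1 := by
  classical
  haveI hne : (nhdsWithin (0:ℝ) (Ioc 0 a)).NeBot := by
    rw [← mem_closure_iff_nhdsWithin_neBot, closure_Ioc ha.ne]
    exact ⟨le_refl 0, ha.le⟩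
  have h0mem : (0:ℝ) ∈ Icc 0 a := ⟨le_refl 0, ha.le⟩
  have hφ0 : φ 0 = 0 := (hvanish 0 h0mem).mpr rfl
  have hφpos : ∀ t ∈ Ioc 0 a, 0 < φ t := by
    intro t ht
    rcases (hnonneg t ⟨ht.1.le, ht.2⟩).lt_or_eq with h | h
    · exact h
    · exact absurd ((hvanish t ⟨ht.1.le, ht.2⟩).mp h.symm) ht.1.ne'
  -- basic facts about u
  have hult : ∀ n, u (n + 1) < u n := fun n =>
    (hs1 n).trans_le ((hs2 n).trans (by linarith [hupos n]))
  have huanti : StrictAnti u := strictAnti_nat_of_succ_lt hult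
  have humem : ∀ n, u n ∈ Icc 0 a := fun n => ⟨(hupos n).le, hua n⟩
  have huIoc : ∀ n, u n ∈ Ioc 0 a := fun n => ⟨hupos n, hua n⟩
  have hule : ∀ n, u n ≤ a / 2 ^ n := by
    intro n
    induction n with
    | zero => simpa using hu0.le
    | succ n ih =>
      have h := (hs1 n).le.trans (hs2 n)
      have : u n / 2 ≤ a / 2 ^ n / 2 := by linarith
      calc u (n+1) ≤ u n / 2 := h
        _ ≤ a / 2 ^ n / 2 := this
        _ = a / 2 ^ (n+1) := by ring
  have hpow : Tendsto (fun n : ℕ => a / 2 ^ n) atTop (nhds 0) := by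
    have h := tendsto_pow_atTop_nhds_zero_of_lt_one (by norm_num : (0:ℝ) ≤ 1/2) (by norm_num)
    have := h.const_mul a
    simpa [div_eq_mul_inv, mul_pow, mul_comm] using this
  have hu_tendsto : Tendsto u atTop (nhds 0) :=
    tendsto_of_tendsto_of_tendsto_of_le_of_le tendsto_const_nhds hpow
      (fun n => (hupos n).le) hule
  have hu_filter : Tendsto u atTop (nhdsWithin 0 (Ioc 0 a)) :=
    tendsto_nhdsWithin_of_tendsto_nhds_of_eventually_within _ hu_tendsto
      (Eventually.of_forall huIoc)
  have hspos : ∀ n, 0 < s n := fun n => (hupos (n+1)).trans (hs1 n)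
  have hsmemIcc : ∀ n, s n ∈ Icc (u (n+1)) (u n) := fun n =>
    ⟨(hs1 n).le, (hs2 n).trans (by linarith [hupos n])⟩
  have hsIoc : ∀ n, s n ∈ Ioc 0 a := fun n => ⟨hspos n, (hsmemIcc n).2.trans (hua n)⟩
  have hs_tendsto : Tendsto s atTop (nhds 0) := by
    have h2 : Tendsto (fun n => u n / 2) atTop (nhds 0) := by
      simpa using hu_tendsto.div_const 2
    exact tendsto_of_tendsto_of_tendsto_of_le_of_le tendsto_const_nhds h2
      (fun n => (hspos n).le) (fun n => hs2 n)
  have hs_filter : Tendsto s atTop (nhdsWithin 0 (Ioc 0 a)) :=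
    tendsto_nhdsWithin_of_tendsto_nhds_of_eventually_within _ hs_tendsto
      (Eventually.of_forall hsIoc)
  have hd_pos : ∀ n, 0 < u n - u (n + 1) := fun n => sub_pos.mpr (hult n)
  have hsl_nonneg : ∀ n, 0 ≤ slA φ u n := fun n =>
    div_nonneg (sub_nonneg.mpr (hmono (humem (n+1)) (humem n) (hult n).le)) (hd_pos n).le
  have hsl_mul : ∀ n, slA φ u n * (u n - u (n + 1)) = φ (u n) - φ (u (n + 1)) := fun n =>
    div_mul_cancel₀ _ (hd_pos n).ne'
  have hsl_mono : Monotone (slA φ u) := by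
    apply monotone_nat_of_le_succ
    intro n
    exact hconc.slope_anti_adjacent (humem (n+2)) (humem n) (hult (n+1)) (hult n)
  -- line facts
  have hL0 : ∀ n, LA φ u n (u (n + 1)) = φ (u (n + 1)) := by
    intro n; simp [LA]
  have hL1 : ∀ n, LA φ u n (u n) = φ (u n) := by
    intro n; unfold LA; rw [hsl_mul]; ring
  have hLsucc : ∀ n t, LA φ u (n + 1) t =
      LA φ u n t + (slA φ u (n + 1) - slA φ u n) * (t - u (n + 1)) := by
    intro n t; unfold LA
    linear_combination hsl_mul (n + 1)
  have hLmono : ∀ n, Monotone (LA φ u n) := by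
    intro n x y hxy
    unfold LA
    have := mul_le_mul_of_nonneg_left (sub_le_sub_right hxy (u (n+1))) (hsl_nonneg n)
    linarith
  -- key: LA n is minimal on [u (n+1), u n]
  have hLmin : ∀ n, ∀ t ∈ Icc (u (n + 1)) (u n), ∀ m, LA φ u n t ≤ LA φ u m t := by
    intro n t ht m
    rcases le_total n m with h | h
    · -- upward induction
      have key : ∀ k, n ≤ k → LA φ u n t ≤ LA φ u k t := by
        intro k hk
        induction k with
        | zero => simp_all
        | succ k ih =>
          rcases Nat.lt_or_ge n (k+1) with h' | h'
          · have hnk : n ≤ k := Nat.lt_succ_iff.mp h'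
            have h1 : u (k + 1) ≤ u (n + 1) := huanti.antitone (by omega)
            have h2 : 0 ≤ (slA φ u (k+1) - slA φ u k) * (t - u (k+1)) :=
              mul_nonneg (sub_nonneg.mpr (hsl_mono (Nat.le_succ k)))
                (by linarith [ht.1])
            have := hLsucc k t
            linarith [ih hnk]
          · have hnk : n = k + 1 := le_antisymm hk h'
            rw [hnk]
      exact key m h
    · -- downward: show for all k ≤ n
      have key : ∀ d, LA φ u n t ≤ LA φ u (n - d) t := by
        intro d
        induction d with
        | zero => simp
        | succ d ih =>
          rcases Nat.lt_or_ge d n with h' | h'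
          · have heq : n - d = (n - (d+1)) + 1 := by omega
            have hk1 : n - d ≤ n := by omega
            have h1 : u n ≤ u (n - d) := huanti.antitone hk1
            have h2 : (slA φ u (n - d) - slA φ u (n - (d+1))) * (t - u (n - d)) ≤ 0 :=
              mul_nonpos_of_nonneg_of_nonpos
                (sub_nonneg.mpr (by rw [heq]; exact hsl_mono (Nat.le_succ _)))
                (by linarith [ht.2])
            have h3 := hLsucc (n - (d+1)) t
            rw [← heq] at h3
            linarith
          · have : n - (d+1) = n - d := by omega
            rw [this]; exact ih
      have := key (n - m)
      have hm : n - (n - m) = m := by omega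
      rwa [hm] at this
  -- nonnegativity of lines on [0, a]
  have hfrac : ∀ n, φ (u n) * u (n + 1) ≤ φ (u (n + 1)) * u n := by
    intro n
    have hun := hupos n
    have hb : (0:ℝ) ≤ u (n+1) / u n := div_nonneg (hupos (n+1)).le hun.le
    have hb1 : u (n+1) / u n ≤ 1 := (div_le_one hun).mpr (hult n).le
    have hcomb := hconc.2 h0mem (humem n) (by linarith : (0:ℝ) ≤ 1 - u (n+1)/u n) hb
      (by ring)
    simp only [smul_eq_mul, hφ0, mul_zero, zero_add,
      div_mul_cancel₀ _ hun.ne'] at hcomb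
    rw [div_mul_eq_mul_div, div_le_iff₀ hun] at hcomb
    linarith [hcomb, mul_comm (φ (u n)) (u (n+1))]
  have hL_nonneg0 : ∀ n, 0 ≤ LA φ u n 0 := by
    intro n
    unfold LA
    have hkey : slA φ u n * u (n+1) ≤ φ (u (n+1)) := by
      rw [slA, div_mul_eq_mul_div, div_le_iff₀ (hd_pos n)]
      nlinarith [hfrac n, hnonneg (u (n+1)) (humem (n+1)), hupos (n+1), hult n]
    nlinarith [hkey]
  have hL_nonneg : ∀ n, ∀ t : ℝ, 0 ≤ t → 0 ≤ LA φ u n t := fun n t ht =>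
    (hL_nonneg0 n).trans (hLmono n ht)
  have hbdd : ∀ t : ℝ, 0 ≤ t → BddBelow (range fun n => LA φ u n t) := by
    intro t ht
    exact ⟨0, by rintro x ⟨n, rfl⟩; exact hL_nonneg n t ht⟩
  set ψ := psiA φ u with hψdef
  have hψ_le_L : ∀ (t : ℝ), 0 ≤ t → ∀ n, ψ t ≤ LA φ u n t := fun t ht n =>
    ciInf_le (hbdd t ht) n
  have hψ_eq : ∀ n, ∀ t ∈ Icc (u (n+1)) (u n), ψ t = LA φ u n t := by
    intro n t ht
    have ht0 : (0:ℝ) ≤ t := le_trans (hupos (n+1)).le ht.1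
    exact le_antisymm (hψ_le_L t ht0 n) (le_ciInf (hLmin n t ht))
  have hcover : ∀ t, t ∈ Ioc 0 a → ∃ n, t ∈ Icc (u (n+1)) (u n) := by
    intro t ht
    have hex : ∃ n, u n < t := ((hu_tendsto.eventually (eventually_lt_nhds ht.1)).and
      (Eventually.of_forall fun _ => trivial)).exists.imp fun n h => h.1
    have hN : u (Nat.find hex) < t := Nat.find_spec hex
    have hN0 : Nat.find hex ≠ 0 := by
      intro h
      rw [h, hu0] at hN
      exact absurd ht.2 (not_le.mpr hN)
    refine ⟨Nat.find hex - 1, ?_, ?_⟩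
    · have heq : Nat.find hex - 1 + 1 = Nat.find hex := by omega
      rw [heq]; exact hN.le
    · exact le_of_not_gt (Nat.find_min hex (by omega))
  -- ψ at 0
  have hψ_nonneg : ∀ t : ℝ, 0 ≤ t → 0 ≤ ψ t := fun t ht =>
    le_ciInf fun n => hL_nonneg n t ht
  have hψ0 : ψ 0 = 0 := by
    refine le_antisymm ?_ (hψ_nonneg 0 le_rfl)
    have hle : ∀ n, ψ 0 ≤ φ (u (n + 1)) := by
      intro n
      refine (hψ_le_L 0 le_rfl n).trans ?_
      unfold LA
      nlinarith [mul_nonneg (hsl_nonneg n) (hupos (n+1)).le]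
    have htend : Tendsto (fun n => φ (u (n + 1))) atTop (nhds 0) :=
      (hlim2.comp hu_filter).comp (tendsto_add_atTop_nat 1)
    exact ge_of_tendsto' htend hle
  -- ψ ≤ φ on Ioc
  have hψ_le_φ : ∀ t ∈ Ioc 0 a, ψ t ≤ φ t := by
    intro t ht
    obtain ⟨n, htn⟩ := hcover t ht
    rw [hψ_eq n t htn]
    set p := u (n+1)
    set q := u n
    have hpq : p < q := hult n
    have hd : (0:ℝ) < q - p := sub_pos.mpr hpq
    set μ := (t - p) / (q - p) with hμdef
    have hμ0 : 0 ≤ μ := div_nonneg (by linarith [htn.1]) hd.le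
    have hμ1 : μ ≤ 1 := (div_le_one hd).mpr (by linarith [htn.2])
    have hcomb := hconc.2 (humem (n+1)) (humem n) (by linarith : (0:ℝ) ≤ 1 - μ) hμ0 (by ring)
    rw [smul_eq_mul, smul_eq_mul, smul_eq_mul, smul_eq_mul] at hcomb
    have hpt : (1 - μ) * p + μ * q = t := by
      field_simp [hμdef]
      have h' : μ * (q - p) = t - p := by rw [hμdef]; exact div_mul_cancel₀ _ hd.ne'
      linear_combination h'
    rw [hpt] at hcomb
    have hLval : LA φ u n t = (1 - μ) * φ p + μ * φ q := by
      unfold LA slA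
      field_simp [hμdef]
      ring
    rw [hLval]
    exact hcomb
  have hψpos : ∀ t ∈ Ioc 0 a, 0 < ψ t := by
    intro t ht
    obtain ⟨n, htn⟩ := hcover t ht
    rw [hψ_eq n t htn]
    calc (0:ℝ) < φ (u (n+1)) := hφpos _ (huIoc (n+1))
      _ = LA φ u n (u (n+1)) := (hL0 n).symm
      _ ≤ LA φ u n t := hLmono n htn.1
  -- ratio facts
  have hnode : ∀ n, ψ (u n) / φ (u n) = 1 := by
    intro n
    rw [hψ_eq n (u n) ⟨(hult n).le, le_rfl⟩, hL1 n]
    exact div_self (hφpos _ (huIoc n)).ne'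
  have hsmall : ∀ n, ψ (s n) / φ (s n) ≤ 2 / (n + 1) := by
    intro n
    have hC : 0 < φ (s n) := hφpos _ (hsIoc n)
    have hm : (0:ℝ) < (n:ℝ) + 1 := by positivity
    rw [div_le_div_iff₀ hC hm]
    rw [hψ_eq n (s n) (hsmemIcc n)]
    unfold LA
    set σ := s n
    set u1 := u (n+1)
    set U := u n
    set A := φ U
    set B := φ u1
    set C := φ σ
    set sl := slA φ u n
    have hslm : sl * (U - u1) = A - B := hsl_mul n
    have hd2 : U / 2 ≤ U - u1 := by
      have := (hs1 n).le.trans (hs2 n)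
      linarith
    have hslU : sl * U ≤ 2 * A := by
      nlinarith [mul_nonneg (hsl_nonneg n) (by linarith [hd_pos n] : (0:ℝ) ≤ 2*(U - u1) - U),
        hnonneg u1 (humem (n+1))]
    have hAσ : σ * (2 * ((n:ℝ)+1) * A) ≤ C * U := hs3 n
    have h3 : ((n:ℝ)+1) * (sl * σ) * U ≤ C * U := by
      nlinarith [mul_nonneg (mul_nonneg hm.le (hspos n).le)
        (by linarith : (0:ℝ) ≤ 2 * A - sl * U)]
    have h4 : ((n:ℝ)+1) * (sl * σ) ≤ C :=
      le_of_mul_le_mul_right (by linarith) (hupos n)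
    have h5 : ((n:ℝ)+1) * B ≤ C := hs4 n
    nlinarith [mul_nonneg (mul_nonneg hm.le (hsl_nonneg n)) (hupos (n+1)).le]
  -- eventual bounds on the filter
  have hub : ∀ᶠ t in nhdsWithin (0:ℝ) (Ioc 0 a), ψ t / φ t ≤ 1 :=
    eventually_mem_nhdsWithin.mono fun t ht =>
      (div_le_one (hφpos t ht)).mpr (hψ_le_φ t ht)
  have hlb : ∀ᶠ t in nhdsWithin (0:ℝ) (Ioc 0 a), 0 ≤ ψ t / φ t :=
    eventually_mem_nhdsWithin.mono fun t ht =>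
      div_nonneg (hψ_nonneg t ht.1.le) (hφpos t ht).le
  have hfreq1 : ∃ᶠ t in nhdsWithin (0:ℝ) (Ioc 0 a), 1 ≤ ψ t / φ t :=
    hu_filter.frequently (Frequently.of_forall fun n => (hnode n).ge)
  refine ⟨ψ, ?_, ?_, ?_, ?_, ?_, ?_⟩
  · -- monotone
    intro x hx y hy hxy
    exact le_ciInf fun n => (hψ_le_L x hx.1 n).trans (hLmono n hxy)
  · -- concave
    refine ⟨convex_Icc 0 a, ?_⟩
    intro x hx y hy p q hp hq hpq
    rw [smul_eq_mul, smul_eq_mul, smul_eq_mul, smul_eq_mul]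
    refine le_ciInf fun n => ?_
    have hx' := mul_le_mul_of_nonneg_left (hψ_le_L x hx.1 n) hp
    have hy' := mul_le_mul_of_nonneg_left (hψ_le_L y hy.1 n) hq
    have haff : LA φ u n (p * x + q * y) = p * LA φ u n x + q * LA φ u n y := by
      unfold LA
      linear_combination (φ (u (n+1)) + slA φ u n * (- u (n+1))) * hpq.symm
    rw [haff]
    linarith
  · intro t ht
    rcases eq_or_lt_of_le ht.1 with h | h
    · refine ⟨hψ_nonneg t ht.1, ?_⟩
      rw [← h, hψ0, hφ0]
    · exact ⟨hψ_nonneg t ht.1, hψ_le_φ t ⟨h, ht.2⟩⟩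
  · intro t ht
    constructor
    · intro h
      by_contra ht0
      have : 0 < t := lt_of_le_of_ne ht.1 (Ne.symm ht0)
      exact absurd h (hψpos t ⟨this, ht.2⟩).ne'
    · intro h; rw [h, hψ0]
  · -- liminf = 0
    have hge : (0:ℝ) ≤ liminf (fun t => ψ t / φ t) (nhdsWithin 0 (Ioc 0 a)) :=
      le_liminf_of_le (isCoboundedUnder_ge_of_eventually_le _ hub) hlb
    have hle : ∀ ε : ℝ, 0 < ε →
        liminf (fun t => ψ t / φ t) (nhdsWithin (0:ℝ) (Ioc 0 a)) ≤ ε := by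
      intro ε hε
      obtain ⟨N, hN⟩ := exists_nat_gt (2 / ε)
      have hev : ∀ᶠ n in atTop, ψ (s n) / φ (s n) ≤ ε := by
        refine eventually_atTop.mpr ⟨N, fun n hn => (hsmall n).trans ?_⟩
        rw [div_le_iff₀ (by positivity : (0:ℝ) < (n:ℝ)+1)]
        have : (2:ℝ)/ε < (n:ℝ) + 1 := hN.trans_le (by exact_mod_cast Nat.le_succ_of_le hn)
        rw [div_lt_iff₀ hε] at this
        linarith
      have hfreq : ∃ᶠ t in nhdsWithin (0:ℝ) (Ioc 0 a), ψ t / φ t ≤ ε :=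
        hs_filter.frequently hev.frequently
      exact liminf_le_of_frequently_le hfreq (isBoundedUnder_of_eventually_ge hlb)
    refine le_antisymm ?_ hge
    by_contra hcon
    push_neg at hcon
    have := hle _ (half_pos hcon)
    linarith
  · -- limsup = 1
    refine le_antisymm ?_ ?_
    · exact limsup_le_of_le (isCoboundedUnder_le_of_eventually_le _ hlb) hub
    · exact le_limsup_of_frequently_le hfreq1 (isBoundedUnder_of_eventually_le hub)

theorem stmt_0 (a : ℝ) (ha : 0 < a) (φ : ℝ → ℝ)
    (hmono : MonotoneOn φ (Icc 0 a))
    (hconc : ConcaveOn ℝ (Icc 0 a) φ)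
    (hnonneg : ∀ t ∈ Icc 0 a, 0 ≤ φ t)
    (hvanish : ∀ t ∈ Icc 0 a, φ t = 0 ↔ t = 0)
    (hlim1 : Tendsto (fun t => t / φ t) (nhdsWithin 0 (Ioc 0 a)) (nhds 0))
    (hlim2 : Tendsto φ (nhdsWithin 0 (Ioc 0 a)) (nhds 0)) :
    ∃ ψ : ℝ → ℝ,
      MonotoneOn ψ (Icc 0 a) ∧
      ConcaveOn ℝ (Icc 0 a) ψ ∧
      (∀ t ∈ Icc 0 a, 0 ≤ ψ t ∧ ψ t ≤ φ t) ∧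
      (∀ t ∈ Icc 0 a, ψ t = 0 ↔ t = 0) ∧
      liminf (fun t => ψ t / φ t) (nhdsWithin 0 (Ioc 0 a)) = 0 ∧
      limsup (fun t => ψ t / φ t) (nhdsWithin 0 (Ioc 0 a)) = 1 := by
  classical
  haveI hne : (nhdsWithin (0:ℝ) (Ioc 0 a)).NeBot := by
    rw [← mem_closure_iff_nhdsWithin_neBot, closure_Ioc ha.ne]
    exact ⟨le_refl 0, ha.le⟩
  have hφpos : ∀ t ∈ Ioc 0 a, 0 < φ t := by
    intro t ht
    rcases (hnonneg t ⟨ht.1.le, ht.2⟩).lt_or_eq with h | h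
    · exact h
    · exact absurd ((hvanish t ⟨ht.1.le, ht.2⟩).mp h.symm) ht.1.ne'
  -- step existence
  have hstep : ∀ (n : ℕ) (t : ℝ), 0 < t → t ≤ a →
      ∃ p : ℝ × ℝ, 0 < p.2 ∧ p.2 < p.1 ∧ p.1 ≤ t / 2 ∧ p.1 ≤ a ∧
        p.1 * (2 * (n + 1) * φ t) ≤ φ p.1 * t ∧
        ((n : ℝ) + 1) * φ p.2 ≤ φ p.1 := by
    intro n t ht hta
    have hφt : 0 < φ t := hφpos t ⟨ht, hta⟩
    have hε : (0:ℝ) < t / (2 * ((n:ℝ) + 1) * φ t) := by positivity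
    have h1 : ∀ᶠ x in nhdsWithin (0:ℝ) (Ioc 0 a), x / φ x < t / (2 * ((n:ℝ)+1) * φ t) :=
      hlim1.eventually (eventually_lt_nhds hε)
    have h2 : ∀ᶠ x in nhdsWithin (0:ℝ) (Ioc 0 a), x < t / 2 :=
      eventually_nhdsWithin_of_eventually_nhds (eventually_lt_nhds (by positivity))
    obtain ⟨σ, ⟨hσ1, hσ2⟩, hσmem⟩ := ((h1.and h2).and eventually_mem_nhdsWithin).exists
    have hφσ : 0 < φ σ := hφpos σ hσmem
    have hεσ : (0:ℝ) < φ σ / ((n:ℝ) + 1) := by positivity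
    have h3 : ∀ᶠ x in nhdsWithin (0:ℝ) (Ioc 0 a), φ x < φ σ / ((n:ℝ)+1) :=
      hlim2.eventually (eventually_lt_nhds hεσ)
    have h4 : ∀ᶠ x in nhdsWithin (0:ℝ) (Ioc 0 a), x < σ :=
      eventually_nhdsWithin_of_eventually_nhds (eventually_lt_nhds hσmem.1)
    obtain ⟨τ, ⟨hτ1, hτ2⟩, hτmem⟩ := ((h3.and h4).and eventually_mem_nhdsWithin).exists
    refine ⟨(σ, τ), hτmem.1, hτ2, hσ2.le, hσmem.2, ?_, ?_⟩
    · have := (div_lt_div_iff₀ hφσ (by positivity : (0:ℝ) < 2 * ((n:ℝ)+1) * φ t)).mp hσ1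
      linarith
    · show ((n:ℝ) + 1) * φ τ ≤ φ σ
      rw [lt_div_iff₀ (by positivity : (0:ℝ) < (n:ℝ)+1)] at hτ1
      nlinarith
  -- recursive construction
  let w : ℕ → {t : ℝ // 0 < t ∧ t ≤ a} := fun n =>
    Nat.rec ⟨a, ha, le_rfl⟩
      (fun n p =>
        ⟨(hstep n p.1 p.2.1 p.2.2).choose.2, by
          obtain ⟨h1, h2, h3, h4, _, _⟩ := (hstep n p.1 p.2.1 p.2.2).choose_spec
          exact ⟨h1, le_trans h2.le (le_trans h3 (by linarith [p.2.1, p.2.2]))⟩⟩) n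
  have hwsucc : ∀ n, (w (n+1) : ℝ) = (hstep n (w n).1 (w n).2.1 (w n).2.2).choose.2 :=
    fun n => rfl
  refine aux0 a ha φ hmono hconc hnonneg hvanish hlim2 (fun n => (w n).1)
    (fun n => (hstep n (w n).1 (w n).2.1 (w n).2.2).choose.1) rfl
    (fun n => (w n).2.1) (fun n => (w n).2.2) ?_ ?_ ?_ ?_
  · intro n
    exact (hstep n (w n).1 (w n).2.1 (w n).2.2).choose_spec.2.1
  · intro n
    exact (hstep n (w n).1 (w n).2.1 (w n).2.2).choose_spec.2.2.1
  · intro n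
    exact (hstep n (w n).1 (w n).2.1 (w n).2.2).choose_spec.2.2.2.2.1
  · intro n
    exact (hstep n (w n).1 (w n).2.1 (w n).2.2).choose_spec.2.2.2.2.2
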